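/- Let k be a commutative ring, let q, η, λ be invertible elements of k satisfying η·λ·q^{r−1} = 1, let r ≥ 1 be an integer, and for 0 ≤ i ≤ r set α_i = (−1)^i · C(r,i)_q · q^{(i²+i)/2} · (q^{−1})^{r·i} · (η^{−1})^i. Then for all integers u ≥ 0 and v ≥ 0 with u + v < r: Σ_{i=u}^{r−v} α_i · C(i,u)_q · C(r−i,v)_q · λ^{r−i−v} · q^{u(r−i−v)} = 0. -/

import Mathlib

open Polynomial

/-- The Gaussian (q-binomial) coefficient as a polynomial in ℤ[q], defined by
`C(n,0) = 1`, `C(0,i+1) = 0` and the q-Pascal identity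
`C(n+1,h+1) = q^(h+1)·C(n,h+1) + C(n,h)`. -/
noncomputable def gaussBinom : ℕ → ℕ → Polynomial ℤ
  | 0, 0 => 1
  | 0, _ + 1 => 0
  | _ + 1, 0 => 1
  | n + 1, h + 1 => Polynomial.X ^ (h + 1) * gaussBinom n (h + 1) + gaussBinom n h

lemma gaussBinom_zero_right : ∀ n, gaussBinom n 0 = 1
  | 0 => rfl
  | _ + 1 => rfl

lemma gaussBinom_eq_zero : ∀ {n i}, n < i → gaussBinom n i = 0
  | 0, _ + 1, _ => rfl
  | n + 1, i + 1, h => by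
      rw [show gaussBinom (n+1) (i+1) = X ^ (i+1) * gaussBinom n (i+1) + gaussBinom n i from rfl,
        gaussBinom_eq_zero (by omega : n < i + 1), gaussBinom_eq_zero (by omega : n < i)]
      ring

lemma gaussBinom_self : ∀ n, gaussBinom n n = 1
  | 0 => rfl
  | n + 1 => by
      rw [show gaussBinom (n+1) (n+1) = X ^ (n+1) * gaussBinom n (n+1) + gaussBinom n n from rfl,
        gaussBinom_eq_zero (by omega), gaussBinom_self n]
      ring

/-- `ff n = ∏_{t=1}^n (X^t - 1)` -/
noncomputable def ff (n : ℕ) : Polynomial ℤ := ∏ t ∈ Finset.range n, (X ^ (t + 1) - 1)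

lemma ff_ne_zero (n : ℕ) : ff n ≠ 0 := by
  apply Finset.prod_ne_zero_iff.2
  intro t _
  have := Polynomial.X_pow_sub_C_ne_zero (R := ℤ) (n := t + 1) (by omega) 1
  simpa using this

lemma ff_succ (n : ℕ) : ff (n + 1) = ff n * (X ^ (n + 1) - 1) := Finset.prod_range_succ _ _

lemma gauss_mul : ∀ n i, i ≤ n → gaussBinom n i * (ff i * ff (n - i)) = ff n
  | 0, 0, _ => by simp [gaussBinom, ff]
  | n + 1, 0, _ => by simp [gaussBinom_zero_right, ff]
  | n + 1, i + 1, h => by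
      rw [show gaussBinom (n+1) (i+1) = X ^ (i+1) * gaussBinom n (i+1) + gaussBinom n i from rfl]
      rcases Nat.lt_or_ge n (i + 1) with hlt | hle
      · have hni : i = n := by omega
        subst hni
        rw [gaussBinom_eq_zero (by omega : i < i + 1), gaussBinom_self,
          Nat.sub_self]
        show (X ^ (i+1) * 0 + 1) * (ff (i+1) * ff 0) = ff (i+1)
        simp [ff]
      · have IH1 := gauss_mul n (i+1) hle
        have IH2 := gauss_mul n i (by omega)
        have e1 : n - i = (n - (i+1)) + 1 := by omega
        have e2 : n + 1 - (i + 1) = n - i := by omega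
        have key : (X : Polynomial ℤ) ^ (i + 1) * X ^ (n - i) = X ^ (n + 1) := by
          rw [← pow_add]; congr 1; omega
        have F : ff (n - i) = ff (n - (i+1)) * (X ^ (n - i) - 1) := by
          rw [e1, ff_succ, ← e1]
        rw [ff_succ i] at IH1
        rw [e2, ff_succ n, ff_succ i, e1, ff_succ (n - (i+1)), ← e1]
        -- IH1 : gaussBinom n (i+1) * (ff i * (X^(i+1)-1) * ff (n-(i+1))) = ff n  (roughly)
        linear_combination (X ^ (i+1) * ((X:Polynomial ℤ) ^ (n-i) - 1)) * IH1 + ((X:Polynomial ℤ) ^ (i+1) - 1) * IH2 + ff n * key + (1 - (X:Polynomial ℤ) ^ (i+1)) * gaussBinom n i * ff i * F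

lemma gauss_trinomial (r u v i : ℕ) (hu : u ≤ i) (hiv : i + v ≤ r) :
    gaussBinom r i * gaussBinom i u * gaussBinom (r - i) v =
    gaussBinom r u * gaussBinom (r - u) v * gaussBinom (r - u - v) (i - u) := by
  have E1 := gauss_mul r i (by omega)
  have E2 := gauss_mul i u hu
  have E3 := gauss_mul (r - i) v (by omega)
  have E4 := gauss_mul r u (by omega)
  have E5 := gauss_mul (r - u) v (by omega)
  have E6 := gauss_mul (r - u - v) (i - u) (by omega)
  rw [show r - u - v - (i - u) = r - i - v by omega] at E6
  have hM : (ff u * ff v * ff (i - u) * ff (r - i - v) * ff i * ff (r - i) * ff (r - u) *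
      ff (r - u - v)) ≠ 0 := by
    repeat' apply mul_ne_zero
    all_goals exact ff_ne_zero _
  apply mul_right_cancel₀ hM
  linear_combination
      (ff (r - u) * ff (r - u - v)) *
        ((gaussBinom i u * (ff u * ff (i - u))) * (gaussBinom (r - i) v * (ff v * ff (r - i - v))) * E1
          + ff r * (gaussBinom (r - i) v * (ff v * ff (r - i - v))) * E2
          + (ff r * ff i) * E3)
      - (ff i * ff (r - i)) *
        ((gaussBinom (r - u) v * (ff v * ff (r - u - v))) * (gaussBinom (r - u - v) (i - u) * (ff (i - u) * ff (r - i - v))) * E4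
          + ff r * (gaussBinom (r - u - v) (i - u) * (ff (i - u) * ff (r - i - v))) * E5
          + (ff r * ff (r - u)) * E6)

lemma even_mul_pred (a : ℕ) : a * (a - 1) % 2 = 0 := by
  cases a with
  | zero => simp
  | succ s =>
      simp only [Nat.add_sub_cancel]
      rw [mul_comm]
      exact Nat.even_iff.mp (Nat.even_mul_succ_self s)

lemma tri_succ (j : ℕ) : (j + 1) * j / 2 = j * (j - 1) / 2 + j := by
  cases j with
  | zero => simp
  | succ s =>
      have e : (s + 1 + 1) * (s + 1) = (s + 1) * s + 2 * (s + 1) := by ring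
      have h2 := even_mul_pred (s + 1)
      simp only [Nat.add_sub_cancel] at h2 ⊢
      omega

/-- auxiliary summand for the telescoping proof of the Gauss identity -/
noncomputable def gg (M : ℕ) (l : ℕ) : Polynomial ℤ :=
  (-1 : Polynomial ℤ) ^ l * X ^ ((l + 1) * l / 2) * gaussBinom M l

lemma gauss_alt (M : ℕ) :
    ∑ j ∈ Finset.range (M + 2), (-1 : Polynomial ℤ) ^ j * X ^ (j * (j - 1) / 2) *
      gaussBinom (M + 1) j = 0 := by
  have key : ∀ j ∈ Finset.range (M + 1),
      (-1 : Polynomial ℤ) ^ (j + 1) * X ^ ((j + 1) * ((j + 1) - 1) / 2) * gaussBinom (M + 1) (j + 1)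
      = gg M (j + 1) - gg M j := by
    intro j _
    simp only [Nat.add_sub_cancel, gg]
    rw [show gaussBinom (M + 1) (j + 1) = X ^ (j + 1) * gaussBinom M (j + 1) + gaussBinom M j
      from rfl]
    have e2 : (j + 1) * j / 2 + (j + 1) = (j + 1 + 1) * (j + 1) / 2 := by
      have := tri_succ (j + 1)
      simp only [Nat.add_sub_cancel] at this
      omega
    have e3 : (X : Polynomial ℤ) ^ ((j + 1) * j / 2) * X ^ (j + 1)
        = X ^ ((j + 1 + 1) * (j + 1) / 2) := by
      rw [← pow_add, e2]
    linear_combination ((-1 : Polynomial ℤ) ^ (j + 1) * gaussBinom M (j + 1)) * e3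
  rw [Finset.sum_range_succ', Finset.sum_congr rfl key, Finset.sum_range_sub (gg M)]
  simp [gg, gaussBinom_eq_zero (show M < M + 1 by omega), gaussBinom_zero_right]

section Helpers
variable {k : Type*} [CommRing k]

lemma unit_pow_cancel (q : kˣ) {a b : ℕ} (h : b ≤ a) :
    (q : k) ^ a * ((q⁻¹ : kˣ) : k) ^ b = (q : k) ^ (a - b) := by
  calc (q : k) ^ a * ((q⁻¹ : kˣ) : k) ^ b
      = (q : k) ^ (a - b) * (((q : k) * ((q⁻¹ : kˣ) : k)) ^ b) := by
        rw [mul_pow, ← mul_assoc, ← pow_add, Nat.sub_add_cancel h]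
    _ = (q : k) ^ (a - b) := by rw [Units.mul_inv, one_pow, mul_one]

lemma even_sq (a : ℕ) : (a ^ 2 + a) % 2 = 0 := by
  have e : a ^ 2 + a = a * (a + 1) := by ring
  rw [e]
  exact Nat.even_iff.mp (Nat.even_mul_succ_self a)

lemma main_point (q η lam : kˣ) (r u v N j : ℕ)
    (hr : 1 ≤ r) (hN : N = r - u - v) (huv : u + v < r) (hj : j ≤ N)
    (hA9k : (η : k) * (lam : k) * (q : k) ^ (r - 1) = 1) :
    ((-1 : k) ^ (u + j) * Polynomial.aeval (q : k) (gaussBinom r (u + j)) *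
        (q : k) ^ (((u + j) ^ 2 + (u + j)) / 2) * ((q⁻¹ : kˣ) : k) ^ (r * (u + j)) *
        ((η⁻¹ : kˣ) : k) ^ (u + j)) *
      Polynomial.aeval (q : k) (gaussBinom (u + j) u) *
      Polynomial.aeval (q : k) (gaussBinom (r - (u + j)) v) *
      (lam : k) ^ (r - (u + j) - v) * (q : k) ^ (u * (r - (u + j) - v)) *
      ((q : k) ^ (r * (r - v)) * (η : k) ^ (r - v) * (q : k) ^ ((r - 1) * N))
    = ((-1 : k) ^ u * Polynomial.aeval (q : k) (gaussBinom r u) *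
        Polynomial.aeval (q : k) (gaussBinom (r - u) v) *
        (q : k) ^ ((u ^ 2 + u) / 2 + r * N + u * N)) *
      ((-1 : k) ^ j * (q : k) ^ (j * (j - 1) / 2) *
        Polynomial.aeval (q : k) (gaussBinom N j)) := by
  rw [show r - (u + j) - v = N - j by omega]
  have tri := congrArg (Polynomial.aeval (q : k)) (gauss_trinomial r u v (u + j) (by omega) (by omega))
  simp only [map_mul] at tri
  rw [show u + j - u = j by omega, ← hN] at tri
  have c1 : (q : k) ^ (r * (r - v)) * ((q⁻¹ : kˣ) : k) ^ (r * (u + j)) = (q : k) ^ (r * (N - j)) := by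
    have hle : r * (u + j) ≤ r * (r - v) := Nat.mul_le_mul_left _ (by omega)
    rw [unit_pow_cancel q hle]
    congr 1
    have e : r * (u + j) + r * (N - j) = r * (r - v) := by rw [← Nat.mul_add]; congr 1; omega
    omega
  have c2 : (η : k) ^ (r - v) * ((η⁻¹ : kˣ) : k) ^ (u + j) = (η : k) ^ (N - j) := by
    rw [unit_pow_cancel η (by omega : u + j ≤ r - v)]
    congr 1
    omega
  have c3 : (η : k) ^ (N - j) * (lam : k) ^ (N - j) * (q : k) ^ ((r - 1) * (N - j)) = 1 := by
    rw [pow_mul, ← mul_pow, ← mul_pow, hA9k, one_pow]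
  have c4 : (q : k) ^ (((u + j) ^ 2 + (u + j)) / 2) *
      ((q : k) ^ (r * (N - j)) * ((q : k) ^ (u * (N - j)) * (q : k) ^ ((r - 1) * N)))
      = (q : k) ^ ((u ^ 2 + u) / 2 + r * N + u * N + j * (j - 1) / 2) *
        (q : k) ^ ((r - 1) * (N - j)) := by
    simp only [← pow_add]
    congr 1
    have a1 : (u + j) ^ 2 + (u + j) = (u ^ 2 + u) + j * (j - 1) + 2 * (u * j) + 2 * j := by
      cases j with
      | zero => simp
      | succ s => simp only [Nat.add_sub_cancel]; ring
    have m1 : r * (N - j) + r * j = r * N := by rw [← Nat.mul_add]; congr 1; omega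
    have m2 : u * (N - j) + u * j = u * N := by rw [← Nat.mul_add]; congr 1; omega
    have m3 : (r - 1) * (N - j) + (r - 1) * j = (r - 1) * N := by
      rw [← Nat.mul_add]; congr 1; omega
    have m4 : (r - 1) * j + j = r * j := by
      cases r with
      | zero => omega
      | succ t => simp only [Nat.add_sub_cancel]; ring
    have ev1 := even_sq (u + j)
    have ev2 := even_sq u
    have ev3 := even_mul_pred j
    omega
  linear_combination
    ((-1 : k) ^ (u + j) * (q : k) ^ (((u + j) ^ 2 + (u + j)) / 2) *
      ((q⁻¹ : kˣ) : k) ^ (r * (u + j)) * ((η⁻¹ : kˣ) : k) ^ (u + j) * (lam : k) ^ (N - j) *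
      (q : k) ^ (u * (N - j)) * (q : k) ^ (r * (r - v)) * (η : k) ^ (r - v) *
      (q : k) ^ ((r - 1) * N)) * tri +
    ((-1 : k) ^ (u + j) * Polynomial.aeval (q : k) (gaussBinom r u) *
      Polynomial.aeval (q : k) (gaussBinom (r - u) v) * Polynomial.aeval (q : k) (gaussBinom N j) *
      (q : k) ^ (((u + j) ^ 2 + (u + j)) / 2) * ((η⁻¹ : kˣ) : k) ^ (u + j) * (lam : k) ^ (N - j) *
      (q : k) ^ (u * (N - j)) * (η : k) ^ (r - v) * (q : k) ^ ((r - 1) * N)) * c1 +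
    ((-1 : k) ^ (u + j) * Polynomial.aeval (q : k) (gaussBinom r u) *
      Polynomial.aeval (q : k) (gaussBinom (r - u) v) * Polynomial.aeval (q : k) (gaussBinom N j) *
      (q : k) ^ (((u + j) ^ 2 + (u + j)) / 2) * (q : k) ^ (r * (N - j)) * (lam : k) ^ (N - j) *
      (q : k) ^ (u * (N - j)) * (q : k) ^ ((r - 1) * N)) * c2 +
    ((-1 : k) ^ (u + j) * Polynomial.aeval (q : k) (gaussBinom r u) *
      Polynomial.aeval (q : k) (gaussBinom (r - u) v) * Polynomial.aeval (q : k) (gaussBinom N j) *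
      (η : k) ^ (N - j) * (lam : k) ^ (N - j)) * c4 +
    ((-1 : k) ^ (u + j) * Polynomial.aeval (q : k) (gaussBinom r u) *
      Polynomial.aeval (q : k) (gaussBinom (r - u) v) * Polynomial.aeval (q : k) (gaussBinom N j) *
      (q : k) ^ ((u ^ 2 + u) / 2 + r * N + u * N + j * (j - 1) / 2)) * c3

end Helpers

/-- equations (A.10b): under condition (A.9), the coefficients of
`(ad_c x)^r y` satisfy the second family of equations making it primitive. -/
theorem equations_A10b {k : Type*} [CommRing k] (q η lam : kˣ) (r : ℕ) (hr : 1 ≤ r)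
    (hA9 : η * lam * q ^ (r - 1) = 1) :
    ∀ u v : ℕ, u + v < r →
      ∑ i ∈ Finset.Icc u (r - v),
        ((-1 : k) ^ i * Polynomial.aeval (q : k) (gaussBinom r i) *
            (q : k) ^ ((i ^ 2 + i) / 2) * ((q⁻¹ : kˣ) : k) ^ (r * i) *
            ((η⁻¹ : kˣ) : k) ^ i) *
          Polynomial.aeval (q : k) (gaussBinom i u) *
          Polynomial.aeval (q : k) (gaussBinom (r - i) v) *
          (lam : k) ^ (r - i - v) * (q : k) ^ (u * (r - i - v)) = 0 := by
  intro u v huv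
  have hN : r - u - v = r - u - v := rfl
  set N := r - u - v with hNdef
  have hN1 : 1 ≤ N := by omega
  have hA9k : (η : k) * (lam : k) * (q : k) ^ (r - 1) = 1 := by
    have h := congrArg (Units.val) hA9
    simpa using h
  rw [← Units.mul_left_eq_zero (q ^ (r * (r - v)) * η ^ (r - v) * q ^ ((r - 1) * N))]
  rw [Finset.sum_mul]
  have hIcc : Finset.Icc u (r - v) =
      (Finset.range (N + 1)).map ⟨fun j => u + j, add_right_injective u⟩ := by
    ext x
    simp only [Finset.mem_Icc, Finset.mem_map, Finset.mem_range, Function.Embedding.coeFn_mk]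
    constructor
    · rintro ⟨h1, h2⟩; exact ⟨x - u, by omega, by omega⟩
    · rintro ⟨j, hj, rfl⟩; omega
  rw [hIcc, Finset.sum_map]
  simp only [Function.Embedding.coeFn_mk]
  have hCu : ((q ^ (r * (r - v)) * η ^ (r - v) * q ^ ((r - 1) * N) : kˣ) : k)
      = (q : k) ^ (r * (r - v)) * (η : k) ^ (r - v) * (q : k) ^ ((r - 1) * N) := by
    simp
  have step : ∀ j ∈ Finset.range (N + 1),
      (((-1 : k) ^ (u + j) * Polynomial.aeval (q : k) (gaussBinom r (u + j)) *
          (q : k) ^ (((u + j) ^ 2 + (u + j)) / 2) * ((q⁻¹ : kˣ) : k) ^ (r * (u + j)) *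
          ((η⁻¹ : kˣ) : k) ^ (u + j)) *
        Polynomial.aeval (q : k) (gaussBinom (u + j) u) *
        Polynomial.aeval (q : k) (gaussBinom (r - (u + j)) v) *
        (lam : k) ^ (r - (u + j) - v) * (q : k) ^ (u * (r - (u + j) - v))) *
        ((q ^ (r * (r - v)) * η ^ (r - v) * q ^ ((r - 1) * N) : kˣ) : k)
      = ((-1 : k) ^ u * Polynomial.aeval (q : k) (gaussBinom r u) *
          Polynomial.aeval (q : k) (gaussBinom (r - u) v) *
          (q : k) ^ ((u ^ 2 + u) / 2 + r * N + u * N)) *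
        ((-1 : k) ^ j * (q : k) ^ (j * (j - 1) / 2) *
          Polynomial.aeval (q : k) (gaussBinom N j)) := by
    intro j hj
    rw [hCu]
    exact main_point q η lam r u v N j hr hNdef huv (by simpa using Nat.lt_succ_iff.mp (Finset.mem_range.mp hj)) hA9k
  rw [Finset.sum_congr rfl step, ← Finset.mul_sum]
  have hsum : ∑ j ∈ Finset.range (N + 1),
      ((-1 : k) ^ j * (q : k) ^ (j * (j - 1) / 2) *
        Polynomial.aeval (q : k) (gaussBinom N j)) = 0 := by
    have h0 := congrArg (Polynomial.aeval (q : k)) (gauss_alt (N - 1))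
    rw [show N - 1 + 2 = N + 1 by omega, show N - 1 + 1 = N by omega, map_sum, map_zero] at h0
    simpa only [map_mul, map_pow, map_neg, map_one, Polynomial.aeval_X] using h0
  rw [hsum, mul_zero]
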